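/- Let K be a field and let q(t,z) ∈ K⟨t,z⟩ be a nonzero polynomial, homogeneous in t and in z separately, with deg_t q ≥ 1. Then the elements z·q(xz−zy, z) and q(xz−zy, z)·z of K⟨x,y,z⟩ are linearly independent over K. -/

import Mathlib

open MonoidAlgebra

noncomputable section

/-- The free associative algebra `K⟨x,y,z⟩`. -/
abbrev FA (K : Type) [Field K] := MonoidAlgebra K (FreeMonoid (Fin 3))

/-- The free associative algebra `K⟨t,z⟩`; `t` is letter `0`, `z` is letter `1`. -/
abbrev FA2 (K : Type) [Field K] := MonoidAlgebra K (FreeMonoid (Fin 2))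

variable (K : Type) [Field K]

/-- The generators `x = Xv 0`, `y = Xv 1`, `z = Xv 2`. -/
def Xv (i : Fin 3) : FA K := MonoidAlgebra.of K (FreeMonoid (Fin 3)) (FreeMonoid.of i)

/-- The substitution homomorphism `K⟨t,z⟩ → K⟨x,y,z⟩` sending `t ↦ f 0`, `z ↦ f 1`. -/
def subst2 (f : Fin 2 → FA K) : FA2 K →ₐ[K] FA K :=
  MonoidAlgebra.lift K (FA K) (FreeMonoid (Fin 2)) (FreeMonoid.lift f)

/-- `q(xz - zy, z)`: the image of `q(t,z)` under `t ↦ xz − zy`, `z ↦ z`. -/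
def qSub (q : FA2 K) : FA K :=
  subst2 K ![Xv K 0 * Xv K 2 - Xv K 2 * Xv K 1, Xv K 2] q

/-! ### Auxiliary combinatorics on words -/

/-- blocks: `t ↦ [x,z]`, `z ↦ [z]`. -/
def gB : Fin 2 → List (Fin 3)
  | 0 => [0, 2]
  | 1 => [2]

/-- The substitution `t ↦ xz`, `z ↦ z` on words. -/
def phiL : List (Fin 2) → List (Fin 3)
  | [] => []
  | a :: l => gB a ++ phiL l

theorem phiL_inj : Function.Injective phiL := by
  intro l₁
  induction l₁ with
  | nil =>
    intro l₂ h
    cases l₂ with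
    | nil => rfl
    | cons b l₂ => exfalso; fin_cases b <;> simp [phiL, gB] at h
  | cons a l₁ ih =>
    intro l₂ h
    cases l₂ with
    | nil => exfalso; fin_cases a <;> simp [phiL, gB] at h
    | cons b l₂ =>
      fin_cases a <;> fin_cases b <;> simp [phiL, gB] at h <;>
        exact congrArg _ (ih h)

theorem count_phiL (l : List (Fin 2)) : (phiL l).count 0 = l.count 0 := by
  induction l with
  | nil => rfl
  | cons a l ih =>
    fin_cases a <;>
      simp [phiL, gB, List.count_append, List.count_cons, ih]

theorem phiL_concat (l : List (Fin 2)) (h : l ≠ []) : ∃ M, phiL l = M ++ [2] := by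
  induction l with
  | nil => exact absurd rfl h
  | cons a l ih =>
    rcases eq_or_ne l [] with rfl | hl
    · fin_cases a
      · exact ⟨[0], rfl⟩
      · exact ⟨[], rfl⟩
    · obtain ⟨M, hM⟩ := ih hl
      exact ⟨gB a ++ M, by simp [phiL, hM]⟩

/-- weight: sum of positions of the letter `0`. -/
def wgt : List (Fin 3) → ℕ
  | [] => 0
  | _ :: l => wgt l + l.count 0

theorem wgt_concat (M : List (Fin 3)) (a : Fin 3) :
    wgt (M ++ [a]) = wgt M + (if a = 0 then M.length else 0) := by
  induction M with
  | nil => simp [wgt]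
  | cons b M ih =>
    have hca : List.count (0 : Fin 3) [a] = if a = 0 then 1 else 0 := by
      fin_cases a <;> decide
    show wgt (M ++ [a]) + List.count 0 (M ++ [a]) =
      wgt M + List.count 0 M + (if a = 0 then (b :: M).length else 0)
    rw [ih, List.count_append, hca, List.length_cons]
    split_ifs with h <;> omega

/-- The key combinatorial contradiction: a finite nonempty set of words, each ending in `z`,
each with `m ≥ 1` occurrences of `x`, cannot be closed under the right rotation
`L ↦ z · (dropLast L)`. -/
theorem no_closure (S : Finset (FreeMonoid (Fin 3))) (m : ℕ) (hm : 1 ≤ m)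
    (h2 : ∀ L ∈ S, ∃ M, FreeMonoid.toList L = M ++ [2])
    (hcount : ∀ L ∈ S, (FreeMonoid.toList L).count 0 = m)
    (hne : S.Nonempty)
    (hclosed : ∀ L ∈ S, FreeMonoid.ofList ((2 :: FreeMonoid.toList L).dropLast) ∈ S) :
    False := by
  classical
  set σ : FreeMonoid (Fin 3) → FreeMonoid (Fin 3) :=
    fun L => FreeMonoid.ofList ((2 :: FreeMonoid.toList L).dropLast) with hσ
  have step : ∀ L ∈ S, σ L ∈ S ∧
      wgt (FreeMonoid.toList (σ L)) = wgt (FreeMonoid.toList L) + m := by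
    intro L hL
    obtain ⟨M, hM⟩ := h2 L hL
    have hσL : FreeMonoid.toList (σ L) = 2 :: M := by
      simp only [hσ, FreeMonoid.toList_ofList, hM]
      rw [show (2 : Fin 3) :: (M ++ [2]) = ((2 : Fin 3) :: M) ++ [2] by simp,
        List.dropLast_concat]
    have hcM : M.count 0 = m := by
      have := hcount L hL
      rw [hM, List.count_append] at this
      simpa using this
    refine ⟨hclosed L hL, ?_⟩
    rw [hσL, hM]
    show wgt M + M.count 0 = wgt (M ++ [2]) + m
    rw [wgt_concat, hcM]
    simp
  obtain ⟨L₀, hL₀⟩ := hne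
  set f : ℕ → FreeMonoid (Fin 3) := fun k => σ^[k] L₀ with hf
  have hfk : ∀ k, f k ∈ S ∧ wgt (FreeMonoid.toList (f k)) =
      wgt (FreeMonoid.toList L₀) + k * m := by
    intro k
    induction k with
    | zero => simpa [hf] using hL₀
    | succ k ih =>
      have h1 : f (k + 1) = σ (f k) := by
        simp [hf, Function.iterate_succ_apply']
      obtain ⟨hmem, hwgt⟩ := step (f k) ih.1
      refine ⟨h1 ▸ hmem, ?_⟩
      rw [h1, hwgt, ih.2]
      ring
  have hinj : Function.Injective fun k => (⟨f k, (hfk k).1⟩ : {x // x ∈ S}) := by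
    intro k l hkl
    have : f k = f l := congrArg Subtype.val hkl
    have h2 := (hfk k).2
    rw [this, (hfk l).2] at h2
    have : k * m = l * m := by omega
    exact Nat.eq_of_mul_eq_mul_right hm this
  obtain ⟨k, l, hkl, hfe⟩ := Finite.exists_ne_map_eq_of_infinite
    (fun k => (⟨f k, (hfk k).1⟩ : {x // x ∈ S}))
  exact hkl (hinj hfe)

/-! ### Algebraic lemmas -/

/-- `phiL` as a map of free monoids. -/
def phiM : FreeMonoid (Fin 2) → FreeMonoid (Fin 3) :=
  fun w => FreeMonoid.ofList (phiL (FreeMonoid.toList w))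

theorem phiM_inj : Function.Injective phiM := by
  intro a b h
  have h1 : phiL (FreeMonoid.toList a) = phiL (FreeMonoid.toList b) := by
    have := congrArg FreeMonoid.toList h
    simpa [phiM] using this
  have := phiL_inj h1
  rw [← FreeMonoid.ofList_toList a, ← FreeMonoid.ofList_toList b, this]

/-- The projection `x ↦ x`, `y ↦ 0`, `z ↦ z`. -/
def piH : FA K →ₐ[K] FA K :=
  MonoidAlgebra.lift K (FA K) (FreeMonoid (Fin 3)) (FreeMonoid.lift ![Xv K 0, 0, Xv K 2])

theorem piH_X (i : Fin 3) : piH K (Xv K i) = ![Xv K 0, 0, Xv K 2] i := by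
  have hXi : Xv K i = MonoidAlgebra.of K (FreeMonoid (Fin 3)) (FreeMonoid.of i) := rfl
  rw [piH, hXi, MonoidAlgebra.lift_of, FreeMonoid.lift_eval_of]

/-- the inner monoid homomorphism of `qSub`. -/
def F2 : FreeMonoid (Fin 2) →* FA K :=
  FreeMonoid.lift ![Xv K 0 * Xv K 2 - Xv K 2 * Xv K 1, Xv K 2]

theorem Xv_single (i : Fin 3) : Xv K i = MonoidAlgebra.single (FreeMonoid.of i) 1 := by
  rw [Xv, MonoidAlgebra.of_apply]

theorem piH_F2 (w : FreeMonoid (Fin 2)) :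
    piH K (F2 K w) = MonoidAlgebra.single (phiM w) 1 := by
  induction w using FreeMonoid.recOn with
  | one =>
    have : phiM 1 = 1 := rfl
    rw [map_one, map_one, this, MonoidAlgebra.one_def]
  | of_mul x xs ih =>
    rw [map_mul, map_mul, ih]
    have hx : piH K (F2 K (FreeMonoid.of x)) =
        MonoidAlgebra.single (FreeMonoid.ofList (gB x)) 1 := by
      fin_cases x
      · show piH K (F2 K (FreeMonoid.of 0)) = _
        rw [F2, FreeMonoid.lift_eval_of]
        simp only [Matrix.cons_val_zero]
        rw [map_sub, map_mul, map_mul, piH_X, piH_X, piH_X]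
        simp only [Matrix.cons_val_zero, Matrix.cons_val_one, Matrix.head_cons,
          Matrix.cons_val_two, Matrix.tail_cons]
        rw [mul_zero, sub_zero, Xv_single, Xv_single, MonoidAlgebra.single_mul_single,
          one_mul]
        rfl
      · show piH K (F2 K (FreeMonoid.of 1)) = _
        rw [F2, FreeMonoid.lift_eval_of]
        simp only [Matrix.cons_val_one, Matrix.head_cons, Matrix.cons_val_zero]
        rw [piH_X]
        simp only [Matrix.cons_val_two, Matrix.tail_cons, Matrix.head_cons]
        rw [Xv_single]
        rfl
    rw [hx, MonoidAlgebra.single_mul_single, one_mul]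
    congr 1

theorem piH_qSub (q : FA2 K) :
    piH K (qSub K q) = MonoidAlgebra.mapDomain phiM q := by
  rw [qSub, subst2, MonoidAlgebra.lift_apply, map_finsuppSum, MonoidAlgebra.mapDomain,
    Finsupp.mapDomain, MonoidAlgebra.ofCoeff_finsuppSum]
  refine Finsupp.sum_congr fun w _ => ?_
  rw [map_smul]
  rw [show (FreeMonoid.lift ![Xv K 0 * Xv K 2 - Xv K 2 * Xv K 1, Xv K 2]) w = F2 K w from rfl]
  rw [piH_F2, MonoidAlgebra.smul_single', mul_one, MonoidAlgebra.ofCoeff_single]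

theorem piH_single_one (c : K) :
    piH K (MonoidAlgebra.single (1 : FreeMonoid (Fin 3)) c) = MonoidAlgebra.single 1 c := by
  rw [piH, MonoidAlgebra.lift_single, map_one, MonoidAlgebra.one_def,
    MonoidAlgebra.smul_single', mul_one]

theorem coeffFA_add (A B : FA K) (u : FreeMonoid (Fin 3)) : (A + B).coeff u = A.coeff u + B.coeff u :=
  Finsupp.add_apply _ _ _

theorem coeffFA_zero (u : FreeMonoid (Fin 3)) : (0 : FA K).coeff u = 0 := rfl

/-- If `q(t,z) ∈ K⟨t,z⟩` is nonzero, homogeneous in `t` and in `z` separately, with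
`deg_t q ≥ 1`, then `z·q(xz−zy,z)` and `q(xz−zy,z)·z` are linearly independent over `K`. -/
theorem linearIndependent_zq_qz (q : FA2 K) (hq : q ≠ 0) (m e : ℕ) (hm : 1 ≤ m)
    (hhom : ∀ w ∈ q.coeff.support, (FreeMonoid.toList w).count 0 = m ∧
      (FreeMonoid.toList w).count 1 = e) :
    LinearIndependent K ![Xv K 2 * qSub K q, qSub K q * Xv K 2] := by
  classical
  rw [LinearIndependent.pair_iff]
  intro s t hst
  set P : FA K := MonoidAlgebra.mapDomain phiM q with hP
  have hP0 : P ≠ 0 := by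
    intro h
    apply hq
    apply MonoidAlgebra.mapDomain_injective phiM_inj
    rw [← hP, h, MonoidAlgebra.mapDomain_zero]
  have hSsub : ∀ L ∈ P.coeff.support, ∃ w ∈ q.coeff.support, phiM w = L := by
    intro L hL
    have := Finsupp.mapDomain_support (f := phiM) (s := q.coeff) (by rw [hP] at hL; exact hL)
    exact Finset.mem_image.mp this
  have h2 : ∀ L ∈ P.coeff.support, ∃ M, FreeMonoid.toList L = M ++ [2] := by
    intro L hL
    obtain ⟨w, hw, rfl⟩ := hSsub L hL
    have hw0 : (FreeMonoid.toList w) ≠ [] := by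
      intro hnil
      have := (hhom w hw).1
      rw [hnil] at this
      simp at this
      omega
    obtain ⟨M, hM⟩ := phiL_concat _ hw0
    exact ⟨M, hM⟩
  have hcnt : ∀ L ∈ P.coeff.support, (FreeMonoid.toList L).count 0 = m := by
    intro L hL
    obtain ⟨w, hw, rfl⟩ := hSsub L hL
    show (phiL (FreeMonoid.toList w)).count 0 = m
    rw [count_phiL]
    exact (hhom w hw).1
  have hex : ∃ L ∈ P.coeff.support,
      FreeMonoid.ofList ((2 :: FreeMonoid.toList L).dropLast) ∉ P.coeff.support := by
    by_contra h
    push_neg at h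
    exact no_closure P.coeff.support m hm h2 hcnt
        (Finsupp.support_nonempty_iff.mpr fun h => hP0 (MonoidAlgebra.coeff_eq_zero.mp h)) h
  obtain ⟨w₀, hw₀S, hbad⟩ := hex
  obtain ⟨M, hM⟩ := h2 w₀ hw₀S
  have hz : piH K (Xv K 2) = Xv K 2 := by
    rw [piH_X]; rfl
  have hπ1 : piH K (Xv K 2 * qSub K q) = Xv K 2 * P := by
    rw [map_mul, piH_qSub, hz, ← hP]
  have hπ2 : piH K (qSub K q * Xv K 2) = P * Xv K 2 := by
    rw [map_mul, piH_qSub, hz, ← hP]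
  -- coefficient computations
  have e1 : (Xv K 2 * P).coeff (FreeMonoid.of 2 * w₀) = P.coeff w₀ := by
    rw [Xv_single, MonoidAlgebra.coeff_single_mul_eq_mul_coeff (x := P) w₀
      (fun a _ => ⟨fun h => mul_left_cancel h, fun h => by rw [h]⟩), one_mul]
  have hu' : FreeMonoid.of 2 * w₀ =
      FreeMonoid.ofList ((2 : Fin 3) :: M) * FreeMonoid.of 2 := by
    apply FreeMonoid.toList.injective
    simp [FreeMonoid.toList_mul, hM]
  have hbad' : FreeMonoid.ofList ((2 : Fin 3) :: M) ∉ P.coeff.support := by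
    have hdl : (2 :: FreeMonoid.toList w₀).dropLast = (2 : Fin 3) :: M := by
      rw [hM, show (2 : Fin 3) :: (M ++ [2]) = ((2 : Fin 3) :: M) ++ [2] by simp,
        List.dropLast_concat]
    rw [← hdl]
    exact hbad
  have e2 : (P * Xv K 2).coeff (FreeMonoid.of 2 * w₀) = 0 := by
    rw [Xv_single, MonoidAlgebra.coeff_mul_single_eq_coeff_mul (x := P)
      (FreeMonoid.ofList ((2 : Fin 3) :: M))
      (fun a _ => ⟨fun h => mul_right_cancel (h.trans hu'), fun h => h ▸ hu'.symm⟩)]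
    rw [Finsupp.notMem_support_iff.mp hbad', zero_mul]
  have hPw₀ : P.coeff w₀ ≠ 0 := Finsupp.mem_support_iff.mp hw₀S
  -- evaluate the relation at z·w₀
  have hs : s = 0 := by
    have h := congrArg (fun g : FA K => (piH K g).coeff (FreeMonoid.of 2 * w₀)) hst
    simp only [Algebra.smul_def, map_add, map_mul, hπ1, hπ2, map_zero,
      MonoidAlgebra.coe_algebraMap, Function.comp_apply, Algebra.algebraMap_self,
      RingHom.id_apply, piH_single_one] at h
    rw [coeffFA_add, coeffFA_zero, MonoidAlgebra.coeff_single_one_mul,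
      MonoidAlgebra.coeff_single_one_mul, e1, e2, mul_zero, add_zero] at h
    rcases mul_eq_zero.mp h with h' | h'
    · exact h'
    · exact absurd h' hPw₀
  have ht : t = 0 := by
    rw [hs, zero_smul, zero_add] at hst
    have e3 : (P * Xv K 2).coeff (w₀ * FreeMonoid.of 2) = P.coeff w₀ := by
      rw [Xv_single, MonoidAlgebra.coeff_mul_single_eq_coeff_mul (x := P) w₀
        (fun a _ => ⟨fun h => mul_right_cancel h, fun h => by rw [h]⟩), mul_one]
    have h := congrArg (fun g : FA K => (piH K g).coeff (w₀ * FreeMonoid.of 2)) hst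
    simp only [Algebra.smul_def, map_mul, hπ2, map_zero,
      MonoidAlgebra.coe_algebraMap, Function.comp_apply, Algebra.algebraMap_self,
      RingHom.id_apply, piH_single_one] at h
    rw [coeffFA_zero, MonoidAlgebra.coeff_single_one_mul, e3] at h
    rcases mul_eq_zero.mp h with h' | h'
    · exact h'
    · exact absurd h' hPw₀
  exact ⟨hs, ht⟩
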